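/- arXiv:1104.4251 — 3 statements merged into one kernel-verified Lean document; each statement's English description precedes it below -/
import Mathlib

section
/- If Π is a row-stochastic matrix whose Cesaro limit P = lim_{k→∞} (1/k) ∑_{j=0}^{k-1} Π^j exists, then for any vector χ, lim_{θ→0+} θ[I - (1-θ)Π]^{-1} χ = P χ (the Abel limit of the discounted sum equals the Cesaro limit applied to χ). -/
open Matrix Filter Topology

namespace AbelAux

attribute [local instance] Matrix.linftyOpNormedAddCommGroup Matrix.linftyOpNormedSpace
  Matrix.linftyOpSemiNormedRing Matrix.linftyOpNormedRing Matrix.linftyOpNormedAlgebra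

variable {n : ℕ}


lemma entry_le_norm (M : Matrix (Fin n) (Fin n) ℝ) (i j : Fin n) : |M i j| ≤ ‖M‖ := by
  rw [Matrix.linfty_opNorm_def]
  calc |M i j| ≤ ∑ j', ‖M i j'‖ :=
        Finset.single_le_sum (f := fun j' => ‖M i j'‖) (fun _ _ => norm_nonneg _) (Finset.mem_univ j)
    _ = ((∑ j', ‖M i j'‖₊ : NNReal) : ℝ) := by push_cast; rfl
    _ ≤ _ := NNReal.coe_le_coe.mpr (Finset.le_sup (f := fun i => ∑ j', ‖M i j'‖₊) (Finset.mem_univ i))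

lemma norm_le_total (M : Matrix (Fin n) (Fin n) ℝ) : ‖M‖ ≤ ∑ i, ∑ j, |M i j| := by
  rw [Matrix.linfty_opNorm_def]
  have h : (Finset.univ.sup fun i : Fin n => ∑ j, ‖M i j‖₊) ≤ ∑ i, ∑ j, ‖M i j‖₊ :=
    Finset.sup_le fun i _ => Finset.single_le_sum (f := fun i => ∑ j, ‖M i j‖₊) (fun _ _ => zero_le') (Finset.mem_univ i)
  calc ((Finset.univ.sup fun i : Fin n => ∑ j, ‖M i j‖₊ : NNReal) : ℝ)
      ≤ ((∑ i, ∑ j, ‖M i j‖₊ : NNReal) : ℝ) := NNReal.coe_le_coe.mpr h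
    _ = ∑ i, ∑ j, |M i j| := by push_cast; rfl

lemma norm_le_one (A : Matrix (Fin n) (Fin n) ℝ)
    (hnn : ∀ i j, 0 ≤ A i j) (hrow : ∀ i, ∑ j, A i j = 1) : ‖A‖ ≤ 1 := by
  rw [Matrix.linfty_opNorm_def]
  have h : (Finset.univ.sup fun i : Fin n => ∑ j, ‖A i j‖₊) ≤ 1 := by
    apply Finset.sup_le
    intro i _
    rw [← NNReal.coe_le_coe]
    push_cast
    have he : (∑ j, ‖A i j‖ : ℝ) = 1 := by
      rw [← hrow i]
      refine Finset.sum_congr rfl fun j _ => ?_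
      rw [Real.norm_eq_abs, abs_of_nonneg (hnn i j)]
    simp only [he, le_refl]
  exact_mod_cast h

lemma norm_pow_le_one (A : Matrix (Fin n) (Fin n) ℝ) [Nonempty (Fin n)]
    (hA : ‖A‖ ≤ 1) : ∀ k, ‖A ^ k‖ ≤ 1 := by
  intro k
  rcases Nat.eq_zero_or_pos k with h | h
  · simp [h]
  · exact (norm_pow_le' A h).trans (pow_le_one₀ (norm_nonneg A) hA)



lemma resolvent_eq [Nonempty (Fin n)] (A : Matrix (Fin n) (Fin n) ℝ)
    (hA : ∀ k, ‖A ^ k‖ ≤ 1) {θ : ℝ} (hθ0 : 0 < θ) (hθ1 : θ < 1) :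
    θ • ((1 : Matrix (Fin n) (Fin n) ℝ) - (1 - θ) • A)⁻¹
      = ∑' k : ℕ, (θ ^ 2 * (1 - θ) ^ k) • ∑ m ∈ Finset.range (k + 1), A ^ m := by
  haveI : CompleteSpace (Matrix (Fin n) (Fin n) ℝ) := FiniteDimensional.complete ℝ _
  set x : ℝ := 1 - θ with hxdef
  have hx0 : 0 ≤ x := by rw [hxdef]; linarith
  have hx1 : x < 1 := by rw [hxdef]; linarith
  set S : ℕ → Matrix (Fin n) (Fin n) ℝ := fun m => ∑ j ∈ Finset.range m, A ^ j with hSdef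
  set u : ℕ → Matrix (Fin n) (Fin n) ℝ := fun k => (θ ^ 2 * x ^ k) • S (k + 1) with hudef
  have hSnorm : ∀ m : ℕ, ‖S m‖ ≤ m := by
    intro m
    refine (norm_sum_le _ _).trans ?_
    calc ∑ j ∈ Finset.range m, ‖A ^ j‖ ≤ ∑ j ∈ Finset.range m, 1 :=
          Finset.sum_le_sum fun j _ => hA j
      _ = m := by simp
  have hgeom : Summable (fun k : ℕ => ((k : ℝ) + 1) * x ^ k) := by
    have h1 := summable_pow_mul_geometric_of_norm_lt_one (R := ℝ) 1
      (by rwa [Real.norm_eq_abs, abs_of_nonneg hx0])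
    have h2 := summable_geometric_of_lt_one hx0 hx1
    simpa [pow_one, add_mul, one_mul] using h1.add h2
  have hu_norm : ∀ k : ℕ, ‖u k‖ ≤ θ ^ 2 * (((k : ℝ) + 1) * x ^ k) := by
    intro k
    rw [hudef]
    simp only
    rw [norm_smul, Real.norm_eq_abs, abs_of_nonneg (by positivity)]
    calc θ ^ 2 * x ^ k * ‖S (k + 1)‖ ≤ θ ^ 2 * x ^ k * ((k : ℝ) + 1) := by
          refine mul_le_mul_of_nonneg_left ?_ (by positivity)
          simpa using hSnorm (k + 1)
      _ = θ ^ 2 * (((k : ℝ) + 1) * x ^ k) := by ring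
  have hu : Summable u := Summable.of_norm_bounded (hgeom.mul_left (θ ^ 2)) hu_norm
  have hu1 : Summable (fun k => u (k + 1)) := (summable_nat_add_iff 1).mpr hu
  have hc : Summable (fun k : ℕ => (θ ^ 2 * x ^ (k + 1)) • (1 : Matrix (Fin n) (Fin n) ℝ)) := by
    refine Summable.smul_const ?_ _
    exact (((summable_nat_add_iff 1).mpr (summable_geometric_of_lt_one hx0 hx1)).mul_left (θ ^ 2))
  have hAS : ∀ k : ℕ, A * S (k + 1) = S (k + 2) - 1 := by
    intro k
    have h1 : A * S (k + 1) = ∑ j ∈ Finset.range (k + 1), A ^ (j + 1) := by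
      rw [hSdef]
      simp only [Finset.mul_sum]
      exact Finset.sum_congr rfl fun j _ => (pow_succ' A j).symm
    have h2 : S (k + 2) = (∑ j ∈ Finset.range (k + 1), A ^ (j + 1)) + A ^ 0 :=
      Finset.sum_range_succ' _ _
    rw [h1, h2, pow_zero]
    abel
  have hterm : ∀ k : ℕ,
      ((1 : Matrix (Fin n) (Fin n) ℝ) - x • A) * u k
        = (u k - u (k + 1)) + (θ ^ 2 * x ^ (k + 1)) • 1 := by
    intro k
    have hx' : x * (θ ^ 2 * x ^ k) = θ ^ 2 * x ^ (k + 1) := by ring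
    have huk1 : u (k + 1) = (θ ^ 2 * x ^ (k + 1)) • S (k + 2) := by
      rw [hudef]
    rw [sub_mul, one_mul, smul_mul_assoc, mul_smul_comm, hAS k, smul_smul, hx', smul_sub, huk1]
    abel
  have hmul : ((1 : Matrix (Fin n) (Fin n) ℝ) - x • A) * (∑' k, u k) = θ • 1 := by
    rw [← Summable.tsum_mul_left _ hu]
    calc ∑' k, ((1 : Matrix (Fin n) (Fin n) ℝ) - x • A) * u k
        = ∑' k, ((u k - u (k + 1)) + (θ ^ 2 * x ^ (k + 1)) • 1) := tsum_congr hterm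
      _ = (∑' k, (u k - u (k + 1)))
            + ∑' k, (θ ^ 2 * x ^ (k + 1)) • (1 : Matrix (Fin n) (Fin n) ℝ) :=
          Summable.tsum_add (hu.sub hu1) hc
      _ = u 0 + (θ * x) • 1 := by
          congr 1
          · rw [Summable.tsum_sub hu hu1, Summable.tsum_eq_zero_add hu]; abel
          · rw [Summable.tsum_smul_const (((summable_nat_add_iff 1).mpr
              (summable_geometric_of_lt_one hx0 hx1)).mul_left (θ ^ 2))]
            congr 1
            have : ∀ k : ℕ, θ ^ 2 * x ^ (k + 1) = (θ ^ 2 * x) * x ^ k := by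
              intro k; ring
            rw [tsum_congr this, tsum_mul_left, tsum_geometric_of_lt_one hx0 hx1]
            have h1x : 1 - x = θ := by rw [hxdef]; ring
            rw [h1x]
            field_simp
      _ = θ • 1 := by
          have hu0 : u 0 = (θ ^ 2) • (1 : Matrix (Fin n) (Fin n) ℝ) := by
            rw [hudef]
            simp [hSdef]
          rw [hu0, ← add_smul]
          congr 1
          rw [hxdef]; ring
  have hinv : ((1 : Matrix (Fin n) (Fin n) ℝ) - x • A)⁻¹ = θ⁻¹ • ∑' k, u k := by
    apply Matrix.inv_eq_right_inv
    rw [mul_smul_comm, hmul, smul_smul, inv_mul_cancel₀ hθ0.ne', one_smul]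
  rw [hinv, smul_smul, mul_inv_cancel₀ hθ0.ne', one_smul]




set_option maxHeartbeats 1000000 in
lemma entry_tendsto [Nonempty (Fin n)] (A P : Matrix (Fin n) (Fin n) ℝ)
    (hnn : ∀ i j, 0 ≤ A i j) (hrow : ∀ i, ∑ j, A i j = 1)
    (hP : ∀ i j, Tendsto (fun k : ℕ => ((k : ℝ)⁻¹ • ∑ m ∈ Finset.range k, A ^ m) i j)
      atTop (𝓝 (P i j)))
    (i j : Fin n) :
    Tendsto (fun θ : ℝ => (θ • ((1 : Matrix (Fin n) (Fin n) ℝ) - (1 - θ) • A)⁻¹) i j)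
      (𝓝[>] 0) (𝓝 (P i j)) := by
  haveI : CompleteSpace (Matrix (Fin n) (Fin n) ℝ) := FiniteDimensional.complete ℝ _
  have hA := norm_pow_le_one A (norm_le_one A hnn hrow)
  set S : ℕ → Matrix (Fin n) (Fin n) ℝ := fun m => ∑ j ∈ Finset.range m, A ^ j with hSdef
  -- norm convergence of the Cesaro averages
  have hPnorm : Tendsto (fun k : ℕ => ‖(k : ℝ)⁻¹ • S k - P‖) atTop (𝓝 0) := by
    refine squeeze_zero (fun k => norm_nonneg _)
      (fun k => norm_le_total ((k : ℝ)⁻¹ • S k - P)) ?_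
    have hentry : ∀ i' j', Tendsto (fun k : ℕ => |((k : ℝ)⁻¹ • S k - P) i' j'|)
        atTop (𝓝 0) := by
      intro i' j'
      have h := tendsto_sub_nhds_zero_iff.mpr (hP i' j')
      have habs := h.abs
      simp only [abs_zero] at habs
      refine habs.congr fun k => ?_
      simp [Matrix.sub_apply, hSdef]
    have := tendsto_finset_sum (Finset.univ : Finset (Fin n))
      (fun i' _ => tendsto_finset_sum (Finset.univ : Finset (Fin n))
        (fun j' _ => hentry i' j'))
    simpa using this
  -- the key estimate
  have key : ∀ ε > (0 : ℝ), ∀ᶠ θ in 𝓝[>] (0 : ℝ),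
      ‖(∑' k : ℕ, (θ ^ 2 * (1 - θ) ^ k) • S (k + 1)) - P‖ < ε := by
    intro ε hε
    have hε2 : (0 : ℝ) < ε / 2 := by linarith
    obtain ⟨N, hN⟩ := eventually_atTop.mp (hPnorm.eventually (gt_mem_nhds hε2))
    set D : ℕ → Matrix (Fin n) (Fin n) ℝ := fun k => S (k + 1) - ((k : ℝ) + 1) • P with hDdef
    have hDb : ∀ k, N ≤ k + 1 → ‖D k‖ ≤ ((k : ℝ) + 1) * (ε / 2) := by
      intro k hk
      have hk0 : ((k : ℝ) + 1) ≠ 0 := by positivity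
      have e : D k = ((k : ℝ) + 1) • (((k : ℝ) + 1)⁻¹ • S (k + 1) - P) := by
        rw [smul_sub, smul_smul, mul_inv_cancel₀ hk0, one_smul]
      rw [e, norm_smul, Real.norm_eq_abs, abs_of_pos (by positivity)]
      refine mul_le_mul_of_nonneg_left ?_ (by positivity)
      have := hN (k + 1) hk
      have hcast : (((k + 1 : ℕ) : ℝ))⁻¹ = (((k : ℝ)) + 1)⁻¹ := by push_cast; ring_nf
      rw [hcast] at this
      exact this.le
    set C : ℝ := ∑ k ∈ Finset.range N, ‖D k‖ with hCdef
    have hC0 : 0 ≤ C := Finset.sum_nonneg fun _ _ => norm_nonneg _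
    set δ : ℝ := min 1 (ε / (2 * (C + 1))) with hδdef
    have hδ0 : 0 < δ := by
      apply lt_min one_pos
      positivity
    filter_upwards [Ioo_mem_nhdsGT_of_mem (Set.left_mem_Ico.mpr hδ0)] with θ hθ
    obtain ⟨hθ0, hθδ⟩ := hθ
    have hθ1 : θ < 1 := lt_of_lt_of_le hθδ (min_le_left _ _)
    set x : ℝ := 1 - θ with hxdef
    have hx0 : 0 ≤ x := by rw [hxdef]; linarith
    have hx1 : x < 1 := by rw [hxdef]; linarith
    have hxn : ‖x‖ < 1 := by rwa [Real.norm_eq_abs, abs_of_nonneg hx0]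
    -- summability facts
    have hgeom : Summable (fun k : ℕ => ((k : ℝ) + 1) * x ^ k) := by
      have h1 := summable_pow_mul_geometric_of_norm_lt_one (R := ℝ) 1 hxn
      have h2 := summable_geometric_of_lt_one hx0 hx1
      simpa [pow_one, add_mul, one_mul] using h1.add h2
    have hgsum : θ ^ 2 * ∑' k : ℕ, ((k : ℝ) + 1) * x ^ k = 1 := by
      have ha := tsum_coe_mul_geometric_of_norm_lt_one (𝕜 := ℝ) hxn
      have hb := tsum_geometric_of_lt_one hx0 hx1
      have hsplit : ∑' k : ℕ, ((k : ℝ) + 1) * x ^ k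
          = (∑' k : ℕ, (k : ℝ) * x ^ k) + ∑' k : ℕ, x ^ k := by
        rw [← Summable.tsum_add (summable_pow_mul_geometric_of_norm_lt_one (R := ℝ) 1 hxn |>.congr
          (fun k => by rw [pow_one])) (summable_geometric_of_lt_one hx0 hx1)]
        exact tsum_congr fun k => by ring
      rw [hsplit, ha, hb]
      have h1x : 1 - x = θ := by rw [hxdef]; ring
      rw [h1x]
      field_simp
      ring
    have hSnorm : ∀ m : ℕ, ‖S m‖ ≤ m := by
      intro m
      refine (norm_sum_le _ _).trans ?_
      calc ∑ j ∈ Finset.range m, ‖A ^ j‖ ≤ ∑ j ∈ Finset.range m, 1 :=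
            Finset.sum_le_sum fun j _ => hA j
        _ = m := by simp
    have hu : Summable (fun k : ℕ => (θ ^ 2 * x ^ k) • S (k + 1)) := by
      refine Summable.of_norm_bounded (hgeom.mul_left (θ ^ 2)) fun k => ?_
      rw [norm_smul, Real.norm_eq_abs, abs_of_nonneg (by positivity)]
      calc θ ^ 2 * x ^ k * ‖S (k + 1)‖ ≤ θ ^ 2 * x ^ k * ((k : ℝ) + 1) := by
            refine mul_le_mul_of_nonneg_left ?_ (by positivity)
            simpa using hSnorm (k + 1)
        _ = θ ^ 2 * (((k : ℝ) + 1) * x ^ k) := by ring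
    have hPs : Summable (fun k : ℕ => (θ ^ 2 * (((k : ℝ) + 1) * x ^ k)) • P) :=
      (hgeom.mul_left (θ ^ 2)).smul_const P
    -- the expansion of the difference
    have hD2 : ∀ k : ℕ, (θ ^ 2 * x ^ k) • D k
        = (θ ^ 2 * x ^ k) • S (k + 1) - (θ ^ 2 * (((k : ℝ) + 1) * x ^ k)) • P := by
      intro k
      rw [hDdef]
      simp only
      rw [smul_sub, smul_smul,
        show θ ^ 2 * x ^ k * ((k : ℝ) + 1) = θ ^ 2 * (((k : ℝ) + 1) * x ^ k) by ring]
    have hsum_eq : ∑' k : ℕ, (θ ^ 2 * x ^ k) • D k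
        = (∑' k : ℕ, (θ ^ 2 * x ^ k) • S (k + 1)) - P := by
      rw [tsum_congr hD2, Summable.tsum_sub hu hPs,
        Summable.tsum_smul_const (hgeom.mul_left (θ ^ 2)) P, tsum_mul_left, hgsum, one_smul]
    -- norm estimates
    have hDbound : ∀ k : ℕ, ‖D k‖ ≤ ((k : ℝ) + 1) * (1 + ‖P‖) := by
      intro k
      rw [hDdef]
      simp only
      refine (norm_sub_le _ _).trans ?_
      have h1 : ‖S (k + 1)‖ ≤ (k : ℝ) + 1 := by simpa using hSnorm (k + 1)
      have h2 : ‖((k : ℝ) + 1) • P‖ = ((k : ℝ) + 1) * ‖P‖ := by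
        rw [norm_smul, Real.norm_eq_abs, abs_of_pos (by positivity)]
      rw [h2]
      nlinarith [norm_nonneg P]
    have hnormsum : Summable (fun k : ℕ => ‖(θ ^ 2 * x ^ k) • D k‖) := by
      refine Summable.of_norm_bounded ((hgeom.mul_left (θ ^ 2 * (1 + ‖P‖)))) fun k => ?_
      rw [Real.norm_eq_abs, abs_of_nonneg (norm_nonneg _), norm_smul, Real.norm_eq_abs,
        abs_of_nonneg (by positivity)]
      calc θ ^ 2 * x ^ k * ‖D k‖ ≤ θ ^ 2 * x ^ k * (((k : ℝ) + 1) * (1 + ‖P‖)) :=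
            mul_le_mul_of_nonneg_left (hDbound k) (by positivity)
        _ = θ ^ 2 * (1 + ‖P‖) * (((k : ℝ) + 1) * x ^ k) := by ring
    have hnorm : ‖∑' k : ℕ, (θ ^ 2 * x ^ k) • D k‖ ≤ ∑' k : ℕ, ‖(θ ^ 2 * x ^ k) • D k‖ :=
      norm_tsum_le_tsum_norm hnormsum
    -- split the sum
    have hsplit2 := (Summable.sum_add_tsum_nat_add N hnormsum).symm
    -- head bound
    have hhead : ∑ k ∈ Finset.range N, ‖(θ ^ 2 * x ^ k) • D k‖ ≤ θ ^ 2 * C := by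
      rw [hCdef, Finset.mul_sum]
      refine Finset.sum_le_sum fun k _ => ?_
      rw [norm_smul, Real.norm_eq_abs, abs_of_nonneg (by positivity)]
      refine mul_le_mul_of_nonneg_right ?_ (norm_nonneg _)
      have : x ^ k ≤ 1 := pow_le_one₀ hx0 hx1.le
      nlinarith [sq_nonneg θ]
    -- tail bound
    have htail : ∑' k : ℕ, ‖(θ ^ 2 * x ^ (k + N)) • D (k + N)‖ ≤ ε / 2 := by
      have hG : Summable (fun k : ℕ => θ ^ 2 * (((k : ℝ) + 1) * x ^ k)) :=
        hgeom.mul_left (θ ^ 2)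
      have hstep : ∀ k : ℕ, ‖(θ ^ 2 * x ^ (k + N)) • D (k + N)‖
          ≤ (ε / 2) * (θ ^ 2 * ((((k + N : ℕ) : ℝ) + 1) * x ^ (k + N))) := by
        intro k
        rw [norm_smul, Real.norm_eq_abs, abs_of_nonneg (by positivity)]
        have hb := hDb (k + N) (by omega)
        calc θ ^ 2 * x ^ (k + N) * ‖D (k + N)‖
            ≤ θ ^ 2 * x ^ (k + N) * ((((k + N : ℕ) : ℝ) + 1) * (ε / 2)) := by
              refine mul_le_mul_of_nonneg_left ?_ (by positivity)
              exact_mod_cast hb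
          _ = (ε / 2) * (θ ^ 2 * ((((k + N : ℕ) : ℝ) + 1) * x ^ (k + N))) := by ring
      have hsumL : Summable (fun k : ℕ => ‖(θ ^ 2 * x ^ (k + N)) • D (k + N)‖) :=
        (summable_nat_add_iff N).mpr hnormsum
      have hsumR : Summable (fun k : ℕ =>
          (ε / 2) * (θ ^ 2 * ((((k + N : ℕ) : ℝ) + 1) * x ^ (k + N)))) := by
        refine Summable.mul_left _ ?_
        exact_mod_cast (summable_nat_add_iff N).mpr hG
      refine (Summable.tsum_le_tsum hstep hsumL hsumR).trans ?_
      rw [tsum_mul_left]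
      have htail_le : ∑' k : ℕ, θ ^ 2 * ((((k + N : ℕ) : ℝ) + 1) * x ^ (k + N))
          ≤ ∑' k : ℕ, θ ^ 2 * (((k : ℝ) + 1) * x ^ k) := by
        have h := Summable.sum_add_tsum_nat_add N hG
        have hhead0 : 0 ≤ ∑ k ∈ Finset.range N, θ ^ 2 * (((k : ℝ) + 1) * x ^ k) :=
          Finset.sum_nonneg fun k _ => by positivity
        push_cast
        push_cast at h
        linarith
      have hfull : ∑' k : ℕ, θ ^ 2 * (((k : ℝ) + 1) * x ^ k) = 1 := by
        rw [tsum_mul_left]; exact hgsum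
      calc ε / 2 * ∑' k : ℕ, θ ^ 2 * ((((k + N : ℕ) : ℝ) + 1) * x ^ (k + N))
          ≤ ε / 2 * ∑' k : ℕ, θ ^ 2 * (((k : ℝ) + 1) * x ^ k) :=
            mul_le_mul_of_nonneg_left htail_le (by linarith)
        _ = ε / 2 := by rw [hfull]; ring
    -- put it all together
    have hbound : ‖(∑' k : ℕ, (θ ^ 2 * x ^ k) • S (k + 1)) - P‖ ≤ θ ^ 2 * C + ε / 2 := by
      rw [← hsum_eq]
      refine hnorm.trans ?_
      rw [hsplit2]
      exact add_le_add hhead htail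
    have hsmall : θ ^ 2 * C + ε / 2 < ε := by
      have hδ2 : δ ≤ ε / (2 * (C + 1)) := min_le_right _ _
      have h1 : θ * (C + 1) < (ε / (2 * (C + 1))) * (C + 1) := by
        refine mul_lt_mul_of_pos_right ?_ (by linarith)
        exact lt_of_lt_of_le hθδ hδ2
      have h2 : (ε / (2 * (C + 1))) * (C + 1) = ε / 2 := by
        field_simp
      nlinarith [sq_nonneg θ]
    exact lt_of_le_of_lt hbound hsmall
  -- convert the estimate into tendsto
  have Hn : Tendsto (fun θ : ℝ => ‖(∑' k : ℕ, (θ ^ 2 * (1 - θ) ^ k) • S (k + 1)) - P‖)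
      (𝓝[>] 0) (𝓝 0) := by
    rw [NormedAddCommGroup.tendsto_nhds_zero]
    intro ε hε
    filter_upwards [key ε hε] with θ hθ
    rwa [Real.norm_eq_abs, abs_of_nonneg (norm_nonneg _)]
  -- conclude for entries
  rw [← tendsto_sub_nhds_zero_iff]
  refine squeeze_zero_norm' ?_ Hn
  filter_upwards [Ioo_mem_nhdsGT_of_mem (Set.left_mem_Ico.mpr one_pos)] with θ hθ
  have heq := resolvent_eq A hA hθ.1 hθ.2
  rw [heq]
  have : (∑' k : ℕ, (θ ^ 2 * (1 - θ) ^ k) • ∑ m ∈ Finset.range (k + 1), A ^ m) i j - P i j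
      = ((∑' k : ℕ, (θ ^ 2 * (1 - θ) ^ k) • S (k + 1)) - P) i j := by
    rw [Matrix.sub_apply]
  rw [this, Real.norm_eq_abs]
  exact entry_le_norm _ i j


end AbelAux

/-- Abel limit of the discounted resolvent applied to χ equals the Cesaro limit applied to χ. -/
theorem stmt_2 {n : ℕ} (A P : Matrix (Fin n) (Fin n) ℝ)
    (hnn : ∀ i j, 0 ≤ A i j) (hrow : ∀ i, ∑ j, A i j = 1)
    (hP : Tendsto (fun k : ℕ => (k : ℝ)⁻¹ • ∑ j ∈ Finset.range k, A ^ j) atTop (𝓝 P))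
    (χ : Fin n → ℝ) :
    Tendsto (fun θ : ℝ => θ • (((1 : Matrix (Fin n) (Fin n) ℝ) - (1 - θ) • A)⁻¹).mulVec χ)
      (𝓝[>] 0) (𝓝 (P.mulVec χ)) := by
  rw [tendsto_pi_nhds]
  intro i
  haveI : Nonempty (Fin n) := ⟨i⟩
  have hP' : ∀ i' j', Tendsto (fun k : ℕ => ((k : ℝ)⁻¹ • ∑ m ∈ Finset.range k, A ^ m) i' j')
      atTop (𝓝 (P i' j')) := by
    intro i' j'
    have hc : Continuous fun M : Matrix (Fin n) (Fin n) ℝ => M i' j' :=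
      (continuous_apply j').comp (continuous_apply i')
    exact (hc.tendsto P).comp hP
  have h := tendsto_finset_sum (Finset.univ : Finset (Fin n)) fun j _ =>
    (AbelAux.entry_tendsto A P hnn hrow hP' i j).mul_const (χ j)
  refine h.congr fun θ => ?_
  show _ = (θ • ((1 - (1 - θ) • A)⁻¹ *ᵥ χ)) i
  simp only [Pi.smul_apply, Matrix.mulVec, dotProduct, smul_eq_mul, Matrix.smul_apply,
    Finset.mul_sum, mul_assoc]
end

section
/- In a strongly absorbing finite directed graph (one satisfying: there is a nonempty set A of absorbing vertices, every vertex has a path to some vertex of A, and for distinct u,v, if (u,v) is an edge then there is no directed path of any positive length from v back to u), every exact power G^d of the graph is also strongly absorbing. -/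
/-- There is a directed walk of length exactly `d` from `u` to `v`. -/
def WalkLen {V : Type*} (G : V → V → Prop) (d : ℕ) (u v : V) : Prop :=
  ∃ f : ℕ → V, f 0 = u ∧ f d = v ∧ ∀ i < d, G (f i) (f (i + 1))

/-- `v` is absorbing: its only outgoing edge is a self-loop. -/
def IsAbsorbing {V : Type*} (G : V → V → Prop) (v : V) : Prop :=
  G v v ∧ ∀ w, G v w → w = v

/-- The graph `G` is strongly absorbing with absorbing set `A`. -/
def StronglyAbsorbing {V : Type*} [Fintype V] (G : V → V → Prop) (A : Set V) : Prop :=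
  A.Nonempty ∧ A ≠ Set.univ ∧ (∀ a ∈ A, IsAbsorbing G a) ∧
  (∀ v, ∃ a ∈ A, ∃ k : ℕ, WalkLen G k v a) ∧
  (∀ u v, u ≠ v → G u v → ∀ d : ℕ, 0 < d → ¬ WalkLen G d v u)

lemma walk_append_fn {V : Type*} {G : V → V → Prop} {m n : ℕ} {u w v : V}
    (h1 : WalkLen G m u w) (h2 : WalkLen G n w v) :
    ∃ c : ℕ → V, c 0 = u ∧ c (m + n) = v ∧ (∀ i < m + n, G (c i) (c (i + 1))) ∧ c m = w := by
  obtain ⟨f, hf0, hfm, hf⟩ := h1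
  obtain ⟨g, hg0, hgn, hg⟩ := h2
  refine ⟨fun i => if i ≤ m then f i else g (i - m), by simp [hf0], ?_, ?_, by simp [hfm]⟩
  · by_cases hn : n = 0
    · subst hn; simpa [hfm] using (hg0.symm.trans hgn)
    · have h : ¬ (m + n ≤ m) := by omega
      simpa [h, show m + n - m = n by omega] using hgn
  · intro i hi
    by_cases h : i + 1 ≤ m
    · have h' : i ≤ m := by omega
      simpa [h, h'] using hf i (by omega)
    · by_cases h' : i ≤ m
      · have hm : i = m := by omega
        simp only [if_pos h', if_neg h, show i + 1 - m = 1 by omega]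
        rw [hm, hfm, ← hg0]
        exact hg 0 (by omega)
      · simp only [h, h', if_false, show i + 1 - m = (i - m) + 1 by omega]
        exact hg (i - m) (by omega)

lemma walk_append {V : Type*} {G : V → V → Prop} {m n : ℕ} {u w v : V}
    (h1 : WalkLen G m u w) (h2 : WalkLen G n w v) : WalkLen G (m + n) u v := by
  obtain ⟨c, hc0, hcL, hcs, _⟩ := walk_append_fn h1 h2
  exact ⟨c, hc0, hcL, hcs⟩

lemma walk_const {V : Type*} {G : V → V → Prop} {a : V} (ha : G a a) (k : ℕ) :
    WalkLen G k a a := ⟨fun _ => a, rfl, rfl, fun _ _ => ha⟩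

lemma walk_absorb {V : Type*} {G : V → V → Prop} {a w : V} {k : ℕ}
    (ha : IsAbsorbing G a) (h : WalkLen G k a w) : w = a := by
  obtain ⟨f, h0, hk, hs⟩ := h
  have key : ∀ i ≤ k, f i = a := by
    intro i
    induction i with
    | zero => intro _; exact h0
    | succ n ih =>
      intro hn
      have hfn : f n = a := ih (by omega)
      have := hs n (by omega)
      rw [hfn] at this
      exact ha.2 _ this
  rw [← hk]; exact key k le_rfl

lemma walk_pow {V : Type*} {G : V → V → Prop} {d n : ℕ} {u v : V}
    (h : WalkLen G (n * d) u v) : WalkLen (fun u v => WalkLen G d u v) n u v := by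
  obtain ⟨f, h0, hL, hs⟩ := h
  refine ⟨fun i => f (i * d), by simpa using h0, by simpa using hL, ?_⟩
  intro i hi
  refine ⟨fun j => f (i * d + j), rfl, ?_, ?_⟩
  · show f (i * d + d) = f ((i + 1) * d)
    congr 1; ring
  · intro j hj
    show G (f (i * d + j)) (f (i * d + (j + 1)))
    rw [show i * d + (j + 1) = (i * d + j) + 1 by omega]
    exact hs (i * d + j) (by nlinarith)

lemma walk_pow_flatten {V : Type*} {G : V → V → Prop} {d : ℕ} {u v : V} :
    ∀ e : ℕ, WalkLen (fun u v => WalkLen G d u v) e u v → WalkLen G (e * d) u v := by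
  intro e
  induction e generalizing u with
  | zero =>
    rintro ⟨g, hg0, hge, _⟩
    exact ⟨fun _ => u, rfl, by rw [show 0 * d = 0 by ring, ← hge, hg0], fun i hi => by omega⟩
  | succ n ih =>
    rintro ⟨g, hg0, hge, hgs⟩
    have hstep : WalkLen G d u (g 1) := by
      have := hgs 0 (by omega)
      rwa [hg0] at this
    have htail : WalkLen (fun u v => WalkLen G d u v) n (g 1) v :=
      ⟨fun i => g (i + 1), rfl, by rw [show n + 1 = n + 1 from rfl] at hge; exact hge,
        fun i hi => hgs (i + 1) (by omega)⟩
    have := walk_append hstep (ih htail)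
    rwa [show d + n * d = (n + 1) * d by ring] at this

lemma no_return_cycle {V : Type*} {G : V → V → Prop}
    (hSA5 : ∀ u v, u ≠ v → G u v → ∀ m : ℕ, 0 < m → ¬ WalkLen G m v u)
    {L : ℕ} {u : V} (c : ℕ → V) (hc0 : c 0 = u) (hcL : c L = u)
    (hcs : ∀ i < L, G (c i) (c (i + 1))) (hx : ∃ j ≤ L, c j ≠ u) : False := by
  classical
  obtain ⟨j, hjL, hju⟩ := hx
  have hex : ∃ i, c i ≠ u := ⟨j, hju⟩
  set i := Nat.find hex with hi_def
  have hi : c i ≠ u := Nat.find_spec hex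
  have hi0 : i ≠ 0 := by intro h; exact hi (by rw [h, hc0])
  have hiL : i ≤ L := by
    by_contra h
    push_neg at h
    exact hju (not_not.mp (Nat.find_min hex (lt_of_le_of_lt hjL h)))
  have hiL' : i < L := lt_of_le_of_ne hiL (fun h => hi (by rw [h, hcL]))
  have hprev : c (i - 1) = u := not_not.mp (Nat.find_min hex (by omega))
  have hedge : G u (c i) := by
    have := hcs (i - 1) (by omega)
    rwa [hprev, show i - 1 + 1 = i by omega] at this
  refine hSA5 u (c i) (Ne.symm hi) hedge (L - i) (by omega)
    ⟨fun t => c (i + t), rfl, ?_, ?_⟩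
  · show c (i + (L - i)) = u
    rw [show i + (L - i) = L by omega, hcL]
  · intro t ht
    show G (c (i + t)) (c (i + (t + 1)))
    rw [show i + (t + 1) = (i + t) + 1 by omega]
    exact hcs (i + t) (by omega)

/-- Every exact power of a strongly absorbing finite directed graph is strongly absorbing. -/
theorem stmt_16 {V : Type*} [Fintype V] (G : V → V → Prop) (A : Set V)
    (hSA : StronglyAbsorbing G A) :
    ∀ d : ℕ, 0 < d → StronglyAbsorbing (fun u v => WalkLen G d u v) A := by
  intro d hd
  obtain ⟨hne, huniv, habs, hreach, hnoret⟩ := hSA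
  refine ⟨hne, huniv, ?_, ?_, ?_⟩
  · intro a ha
    exact ⟨walk_const (habs a ha).1 d, fun w hw => walk_absorb (habs a ha) hw⟩
  · intro v
    obtain ⟨a, ha, k, hk⟩ := hreach v
    have hkd : k ≤ k * d := Nat.le_mul_of_pos_right k hd
    have : WalkLen G (k * d) v a := by
      have := walk_append hk (walk_const (habs a ha).1 (k * d - k))
      rwa [show k + (k * d - k) = k * d by omega] at this
    exact ⟨a, ha, k, walk_pow this⟩
  · intro u v huv hedge e he hwalk
    have hflat : WalkLen G (e * d) v u := walk_pow_flatten e hwalk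
    obtain ⟨c, hc0, hcL, hcs, hcd⟩ := walk_append_fn hedge hflat
    refine no_return_cycle hnoret c hc0 hcL hcs ⟨d, ?_, ?_⟩
    · omega
    · rw [hcd]; exact Ne.symm huv
end

section
/- Spectral bound for strongly absorbing chains: let Π be the transition matrix of a finite Markov chain with a single absorbing state, whose underlying directed graph (edges = positive transition probabilities) is strongly absorbing, and whose non-unity diagonal entries are all at most b < 1. Then every eigenvalue μ of Π with μ ≠ 1 satisfies |μ| ≤ b. -/
open Matrix

open Finset

section aux

variable {n : ℕ} (A : Matrix (Fin (n + 1)) (Fin (n + 1)) ℝ)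

open Classical in
/-- set of states strictly reachable from i -/
noncomputable def reachSet (i : Fin (n+1)) : Finset (Fin (n+1)) :=
  univ.filter (fun k =>   k ≠ i ∧ ∃ d, 0 < d ∧ WalkLen (fun p q => 0 < A p q) d i k)

end aux

theorem reach_card_lt {n : ℕ} (A : Matrix (Fin (n + 1)) (Fin (n + 1)) ℝ)
    (hnoret : ∀ i j, i ≠ j → 0 < A i j →
      ∀ d : ℕ, 0 < d → ¬ WalkLen (fun p q => 0 < A p q) d j i)
    {i j : Fin (n+1)} (hij : i ≠ j) (hA : 0 < A i j) :
    (reachSet A j).card < (reachSet A i).card := by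
  apply Finset.card_lt_card
  constructor
  · intro k hk
    simp only [reachSet, mem_filter, mem_univ, true_and] at hk ⊢
    obtain ⟨hkj, d, hd, f, hf0, hfd, hstep⟩ := hk
    refine ⟨?_, d+1, Nat.succ_pos d, fun m => if m = 0 then i else f (m-1), rfl, by simp [hfd], ?_⟩
    · intro h
      exact hnoret i j hij hA d hd (h ▸ ⟨f, hf0, hfd, hstep⟩)
    · intro m hm
      rcases Nat.eq_zero_or_pos m with rfl | hm0
      · simpa [hf0] using hA
      · have : m - 1 < d := by omega
        simpa [Nat.pos_iff_ne_zero.mp hm0, show m - 1 + 1 = m + 1 - 1 by omega] using hstep _ this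
  · intro hsub
    have hj : j ∈ reachSet A i := by
      simp only [reachSet, mem_filter, mem_univ, true_and]
      exact ⟨hij.symm, 1, one_pos, fun m => if m = 0 then i else j, rfl, by simp, by
        intro m hm; interval_cases m; simpa using hA⟩
    have := hsub hj
    simp [reachSet] at this

open Classical in
theorem stmt_18_aux {n : ℕ} (A : Matrix (Fin (n + 1)) (Fin (n + 1)) ℝ)
    (hnn : ∀ i j, 0 ≤ A i j) (hrow : ∀ i, ∑ j, A i j = 1)
    (hnoret : ∀ i j, i ≠ j → 0 < A i j →
      ∀ d : ℕ, 0 < d → ¬ WalkLen (fun p q => 0 < A p q) d j i)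
    (b : ℝ) (hb0 : 0 ≤ b) (hb1 : b < 1)
    (hdiag : ∀ i, A i i < 1 → A i i ≤ b) :
    ∀ μ ∈ spectrum ℂ (A.map Complex.ofReal), μ ≠ 1 → ‖μ‖ ≤ b := by
  intro μ hμ hμ1
  set M := A.map Complex.ofReal with hM
  set C : Matrix (Fin (n+1)) (Fin (n+1)) ℂ := algebraMap ℂ _ μ - M with hC
  -- det C = 0
  have hdet : C.det = 0 := by
    by_contra hne
    exact (spectrum.mem_iff.mp hμ) ((Matrix.isUnit_iff_isUnit_det _).mpr (isUnit_iff_ne_zero.mpr hne))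
  -- triangularity
  set h : Fin (n+1) → Lex (ℕᵒᵈ × Fin (n+1)) :=
    fun i => toLex (OrderDual.toDual (reachSet A i).card, i) with hh
  have hinj : Function.Injective h := by
    intro i j hij
    simpa [hh, Prod.ext_iff] using congrArg (fun x => (ofLex x).2) hij
  have hBT : C.BlockTriangular h := by
    intro i j hlt
    have hij : i ≠ j := fun e => absurd hlt (by rw [e]; exact lt_irrefl _)
    have hA0 : A i j = 0 := by
      by_contra hA
      have hpos : 0 < A i j := lt_of_le_of_ne (hnn i j) (Ne.symm hA)
      have hcard := reach_card_lt A hnoret hij hpos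
      have : h i < h j := by
        exact Prod.Lex.lt_iff.mpr (Or.inl hcard)
      exact absurd hlt (asymm this)
    simp [hC, Matrix.algebraMap_matrix_apply, hij, hM, hA0]
  set σ := Tuple.sort h with hσ
  have hsm : StrictMono (h ∘ σ) :=
    (Tuple.monotone_sort h).strictMono_of_injective (hinj.comp σ.injective)
  have hBT' : (C.submatrix σ σ).BlockTriangular id := by
    intro i j hlt
    exact hBT (hsm hlt)
  have hdet' : (C.submatrix σ σ).det = ∏ i, C (σ i) (σ i) :=
    Matrix.det_of_upperTriangular hBT'
  have hdet2 : C.det = ∏ i, C i i := by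
    rw [← Matrix.det_submatrix_equiv_self σ C, hdet', Equiv.prod_comp σ (fun i => C i i)]
  have hprod : ∏ i, C i i = 0 := by rw [← hdet2, hdet]
  obtain ⟨i, -, hi⟩ := Finset.prod_eq_zero_iff.mp hprod
  have hCii : C i i = μ - (A i i : ℂ) := by
    simp [hC, Matrix.algebraMap_matrix_apply, hM]
  have hμeq : μ = (A i i : ℂ) := by
    rw [hCii] at hi; linear_combination hi
  have hle1 : A i i ≤ 1 := by
    rw [← hrow i]
    exact Finset.single_le_sum (fun j _ => hnn i j) (Finset.mem_univ i)
  have hne1 : A i i ≠ 1 := by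
    intro e
    apply hμ1
    rw [hμeq, e, Complex.ofReal_one]
  have hlt1 : A i i < 1 := lt_of_le_of_ne hle1 hne1
  rw [hμeq, Complex.norm_real, Real.norm_eq_abs, abs_of_nonneg (hnn i i)]
  exact hdiag i hlt1


/-- Spectral bound for strongly absorbing chains: if the single absorbing state is state n,
the graph of positive transition probabilities is strongly absorbing, and every non-unity
diagonal entry is at most b < 1, then every non-unity eigenvalue μ of Π satisfies ‖μ‖ ≤ b. -/
theorem stmt_18 {n : ℕ} (A : Matrix (Fin (n + 1)) (Fin (n + 1)) ℝ)
    (hnn : ∀ i j, 0 ≤ A i j) (hrow : ∀ i, ∑ j, A i j = 1)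
    (habs : A (Fin.last n) (Fin.last n) = 1)
    (habs' : ∀ j, j ≠ Fin.last n → A (Fin.last n) j = 0)
    (hreach : ∀ i, ∃ k : ℕ, WalkLen (fun p q => 0 < A p q) k i (Fin.last n))
    (hnoret : ∀ i j, i ≠ j → 0 < A i j →
      ∀ d : ℕ, 0 < d → ¬ WalkLen (fun p q => 0 < A p q) d j i)
    (b : ℝ) (hb0 : 0 ≤ b) (hb1 : b < 1)
    (hdiag : ∀ i, A i i < 1 → A i i ≤ b) :
    ∀ μ ∈ spectrum ℂ (A.map Complex.ofReal), μ ≠ 1 → ‖μ‖ ≤ b := by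
  exact stmt_18_aux A hnn hrow hnoret b hb0 hb1 hdiag
end
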